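/- Let Ω ⊆ ℝⁿ be open and let (Aₘ)_{m∈ℕ} be any sequence of subsets of Ω. Then the relative (p(·),ϑ)-capacity is countably subadditive: cap_{p,ϑ}(⋃_{m=1}^∞ Aₘ, Ω) ≤ Σ_{m=1}^∞ cap_{p,ϑ}(Aₘ, Ω). -/

import Mathlib

open MeasureTheory Metric Set Filter ENNReal

noncomputable section

/-- The weighted variable exponent modular `ρ_{p,ϑ,A}(g) = ∫_A |g|^{p(x)} ϑ(x) dx`. -/
def rhoMod {n : ℕ} (p ϑ : EuclideanSpace ℝ (Fin n) → ℝ)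
    (A : Set (EuclideanSpace ℝ (Fin n))) (g : EuclideanSpace ℝ (Fin n) → ℝ) : ℝ≥0∞ :=
  ∫⁻ x in A, ENNReal.ofReal (|g x| ^ p x * ϑ x)

/-- Relative `(p(·),ϑ)`-capacity of a compact set `K` with respect to an open set `Ω`:
the infimum of `ρ_{p,ϑ,Ω}(‖Df‖)` over `C¹` functions with compact support contained in `Ω`
which are `≥ 1` on `K` (with `sInf ∅ = ∞`). -/
def relCapK {n : ℕ} (p ϑ : EuclideanSpace ℝ (Fin n) → ℝ)
    (K Ω : Set (EuclideanSpace ℝ (Fin n))) : ℝ≥0∞ :=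
  sInf ((fun f => rhoMod p ϑ Ω fun x => ‖fderiv ℝ f x‖) ''
    {f : EuclideanSpace ℝ (Fin n) → ℝ |
      ContDiff ℝ 1 f ∧ IsCompact (tsupport f) ∧ tsupport f ⊆ Ω ∧ ∀ x ∈ K, 1 ≤ f x})

/-- Relative capacity of an open subset `U ⊆ Ω`. -/
def relCapO {n : ℕ} (p ϑ : EuclideanSpace ℝ (Fin n) → ℝ)
    (U Ω : Set (EuclideanSpace ℝ (Fin n))) : ℝ≥0∞ :=
  ⨆ (K : Set (EuclideanSpace ℝ (Fin n))) (_ : IsCompact K ∧ K ⊆ U), relCapK p ϑ K Ω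

/-- Relative capacity of an arbitrary subset `A ⊆ Ω`. -/
def relCap {n : ℕ} (p ϑ : EuclideanSpace ℝ (Fin n) → ℝ)
    (A Ω : Set (EuclideanSpace ℝ (Fin n))) : ℝ≥0∞ :=
  ⨅ (U : Set (EuclideanSpace ℝ (Fin n))) (_ : IsOpen U ∧ A ⊆ U ∧ U ⊆ Ω), relCapO p ϑ U Ω

/-- The Sobolev `(p(·),ϑ)`-capacity of `A ⊆ ℝⁿ`. -/
def sobCap {n : ℕ} (p ϑ : EuclideanSpace ℝ (Fin n) → ℝ)
    (A : Set (EuclideanSpace ℝ (Fin n))) : ℝ≥0∞ :=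
  sInf ((fun f => ∫⁻ x, ENNReal.ofReal ((|f x| ^ p x + ‖fderiv ℝ f x‖ ^ p x) * ϑ x)) ''
    {f : EuclideanSpace ℝ (Fin n) → ℝ |
      ContDiff ℝ 1 f ∧ ∃ U, IsOpen U ∧ A ⊆ U ∧ ∀ x ∈ U, 1 ≤ f x})

/-- The weighted measure `μ_ϑ(A) = ∫_A ϑ(x) dx`. -/
def muW {n : ℕ} (ϑ : EuclideanSpace ℝ (Fin n) → ℝ)
    (A : Set (EuclideanSpace ℝ (Fin n))) : ℝ≥0∞ :=
  ∫⁻ x in A, ENNReal.ofReal (ϑ x)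

/-- `μ_ϑ` is doubling with constant `cd`. -/
def DoublingW {n : ℕ} (ϑ : EuclideanSpace ℝ (Fin n) → ℝ) (cd : ℝ) : Prop :=
  1 ≤ cd ∧ ∀ (x : EuclideanSpace ℝ (Fin n)) (r : ℝ), 0 < r →
    muW ϑ (ball x (2 * r)) ≤ ENNReal.ofReal cd * muW ϑ (ball x r)

/-- Poincaré hypothesis with constant `c` for the weight `ϑ`. -/
def PoincareHyp {n : ℕ} (ϑ : EuclideanSpace ℝ (Fin n) → ℝ) (c : ℝ) : Prop :=
  ∀ Ω : Set (EuclideanSpace ℝ (Fin n)), IsOpen Ω → Bornology.IsBounded Ω →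
    ∀ f : EuclideanSpace ℝ (Fin n) → ℝ, ContDiff ℝ 1 f → IsCompact (tsupport f) →
      tsupport f ⊆ Ω →
      ∫ x in Ω, |f x| * ϑ x ≤ c * diam Ω * ∫ x in Ω, ‖fderiv ℝ f x‖ * ϑ x

/-- Embedding hypothesis `L^{p(·)}_ϑ(Ω) ↪ L¹_ϑ(Ω)` with constants `c₁ Ω`. -/
def EmbeddingHyp {n : ℕ} (p ϑ : EuclideanSpace ℝ (Fin n) → ℝ)
    (c₁ : Set (EuclideanSpace ℝ (Fin n)) → ℝ) : Prop :=
  ∀ Ω : Set (EuclideanSpace ℝ (Fin n)), IsOpen Ω → Bornology.IsBounded Ω →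
    0 < c₁ Ω ∧ ∀ g : EuclideanSpace ℝ (Fin n) → ℝ, Measurable g → 1 ≤ rhoMod p ϑ Ω g →
      (∫⁻ x in Ω, ENNReal.ofReal (|g x| * ϑ x)) ≤ ENNReal.ofReal (c₁ Ω) * rhoMod p ϑ Ω g

/-- The Wiener sum `W^{sum}_{p,ϑ}(A,x₀)`. -/
def wienerSum {n : ℕ} (p ϑ : EuclideanSpace ℝ (Fin n) → ℝ)
    (A : Set (EuclideanSpace ℝ (Fin n))) (x₀ : EuclideanSpace ℝ (Fin n)) : ℝ≥0∞ :=
  ∑' i : ℕ,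
    (relCap p ϑ (A ∩ ball x₀ ((2 : ℝ) ^ (-(i : ℤ)))) (ball x₀ ((2 : ℝ) ^ (1 - (i : ℤ)))) /
        relCap p ϑ (ball x₀ ((2 : ℝ) ^ (-(i : ℤ)))) (ball x₀ ((2 : ℝ) ^ (1 - (i : ℤ))))) ^
      (1 / (p x₀ - 1))

/-- The Wiener type integral `W_{p,ϑ}(A,x₀)`. -/
def wienerInt {n : ℕ} (p ϑ : EuclideanSpace ℝ (Fin n) → ℝ)
    (A : Set (EuclideanSpace ℝ (Fin n))) (x₀ : EuclideanSpace ℝ (Fin n)) : ℝ≥0∞ :=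
  ∫⁻ r in Set.Ioo (0 : ℝ) 1,
    (relCap p ϑ (A ∩ ball x₀ r) (ball x₀ (2 * r)) /
        relCap p ϑ (ball x₀ r) (ball x₀ (2 * r))) ^ (1 / (p x₀ - 1)) / ENNReal.ofReal r

namespace CapAux

variable {n : ℕ} {p ϑ : EuclideanSpace ℝ (Fin n) → ℝ}

def Adm (K Ω : Set (EuclideanSpace ℝ (Fin n))) : Set ((EuclideanSpace ℝ (Fin n)) → ℝ) :=
  {f : EuclideanSpace ℝ (Fin n) → ℝ |
      ContDiff ℝ 1 f ∧ IsCompact (tsupport f) ∧ tsupport f ⊆ Ω ∧ ∀ x ∈ K, 1 ≤ f x}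

lemma relCapK_eq (K Ω : Set (EuclideanSpace ℝ (Fin n))) :
    relCapK p ϑ K Ω = sInf ((fun f => rhoMod p ϑ Ω fun x => ‖fderiv ℝ f x‖) '' Adm K Ω) := rfl

lemma relCapK_mono {K K' Ω : Set (EuclideanSpace ℝ (Fin n))} (h : K ⊆ K') :
    relCapK p ϑ K Ω ≤ relCapK p ϑ K' Ω := by
  apply sInf_le_sInf
  apply Set.image_mono
  exact fun f hf => ⟨hf.1, hf.2.1, hf.2.2.1, fun x hx => hf.2.2.2 x (h hx)⟩

lemma relCapK_le_of_adm {K Ω : Set (EuclideanSpace ℝ (Fin n))}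
    {f : EuclideanSpace ℝ (Fin n) → ℝ} (hf : f ∈ Adm K Ω) :
    relCapK p ϑ K Ω ≤ rhoMod p ϑ Ω fun x => ‖fderiv ℝ f x‖ :=
  sInf_le ⟨f, hf, rfl⟩

lemma relCapK_empty (hp0 : ∀ᵐ x ∂(volume : Measure (EuclideanSpace ℝ (Fin n))), p x ≠ 0)
    (Ω : Set (EuclideanSpace ℝ (Fin n))) : relCapK p ϑ ∅ Ω = 0 := by
  apply le_antisymm _ zero_le
  have hmem : (fun _ : EuclideanSpace ℝ (Fin n) => (0:ℝ)) ∈ Adm ∅ Ω := by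
    have h0 : tsupport (fun _ : EuclideanSpace ℝ (Fin n) => (0:ℝ)) = ∅ := by
      rw [tsupport_eq_empty_iff]; rfl
    exact ⟨contDiff_const, h0 ▸ isCompact_empty, h0 ▸ empty_subset Ω, fun x hx => hx.elim⟩
  refine le_trans (relCapK_le_of_adm hmem) ?_
  have : rhoMod p ϑ Ω (fun x => ‖fderiv ℝ (fun _ : EuclideanSpace ℝ (Fin n) => (0:ℝ)) x‖) ≤
      ∫⁻ _ in Ω, 0 ∂(volume : Measure (EuclideanSpace ℝ (Fin n))) := by
    apply lintegral_mono_ae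
    filter_upwards [ae_restrict_of_ae hp0] with x hx
    simp [fderiv_const, Real.zero_rpow hx]
  simpa using this

lemma relCapK_le_relCapO {K U Ω : Set (EuclideanSpace ℝ (Fin n))}
    (hK : IsCompact K) (hKU : K ⊆ U) : relCapK p ϑ K Ω ≤ relCapO p ϑ U Ω :=
  le_iSup₂_of_le K ⟨hK, hKU⟩ le_rfl


set_option maxHeartbeats 1000000 in
lemma adm_union (hpmeas : Measurable p) {C : ℝ} (hC1 : 1 ≤ C)
    (hpae : ∀ᵐ x ∂(volume : Measure (EuclideanSpace ℝ (Fin n))), 0 ≤ p x ∧ p x ≤ C)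
    (hϑ0 : ∀ x, 0 ≤ ϑ x)
    (hϑm : AEMeasurable ϑ (volume : Measure (EuclideanSpace ℝ (Fin n))))
    {K₁ K₂ Ω : Set (EuclideanSpace ℝ (Fin n))}
    {f₁ f₂ : EuclideanSpace ℝ (Fin n) → ℝ}
    (h₁ : f₁ ∈ Adm K₁ Ω) (h₂ : f₂ ∈ Adm K₂ Ω)
    {δ : ℝ} (hδ0 : 0 < δ) (hδ1 : δ < 1) :
    ∃ F ∈ Adm (K₁ ∪ K₂) Ω,
      rhoMod p ϑ Ω (fun x => ‖fderiv ℝ F x‖) ≤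
        ENNReal.ofReal ((1 - δ/2)⁻¹ ^ C) *
          (rhoMod p ϑ Ω (fun x => ‖fderiv ℝ f₁ x‖) +
            rhoMod p ϑ Ω (fun x => ‖fderiv ℝ f₂ x‖)) := by
  obtain ⟨hf₁, hs₁, hΩ₁, hK₁⟩ := h₁
  obtain ⟨hf₂, hs₂, hΩ₂, hK₂⟩ := h₂
  have hhalf : (0:ℝ) < 1 - δ/2 := by linarith
  set c : ℝ := (1 - δ/2)⁻¹ with hc
  have hc1 : 1 ≤ c := (one_le_inv₀ hhalf).mpr (by linarith)
  have hc0 : 0 < c := lt_of_lt_of_le one_pos hc1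
  set w : EuclideanSpace ℝ (Fin n) → ℝ := fun x => (f₁ x - f₂ x) * (f₁ x - f₂ x) + δ * δ with hwdef
  have hwpos : ∀ x, 0 < w x := fun x => by
    have := mul_self_nonneg (f₁ x - f₂ x)
    simp only [hwdef]; nlinarith
  set F : EuclideanSpace ℝ (Fin n) → ℝ :=
    fun x => (c/2) * (f₁ x + f₂ x + (Real.sqrt (w x) - δ)) with hFdef
  -- smoothness
  have hFc : ContDiff ℝ 1 F := by
    apply ContDiff.mul contDiff_const
    exact (hf₁.add hf₂).add
      ((((hf₁.sub hf₂).mul (hf₁.sub hf₂)).add contDiff_const).sqrt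
        (fun x => (hwpos x).ne') |>.sub contDiff_const)
  -- the derivative
  set s : EuclideanSpace ℝ (Fin n) → ℝ := fun x => (f₁ x - f₂ x) / Real.sqrt (w x) with hsdef
  set DF : EuclideanSpace ℝ (Fin n) → (EuclideanSpace ℝ (Fin n)) →L[ℝ] ℝ := fun x =>
    (c/2) • (fderiv ℝ f₁ x + fderiv ℝ f₂ x + s x • (fderiv ℝ f₁ x - fderiv ℝ f₂ x)) with hDF
  have hder : ∀ x, HasFDerivAt F (DF x) x := by
    intro x
    have hd₁ : HasFDerivAt f₁ (fderiv ℝ f₁ x) x := (hf₁.differentiable one_ne_zero x).hasFDerivAt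
    have hd₂ : HasFDerivAt f₂ (fderiv ℝ f₂ x) x := (hf₂.differentiable one_ne_zero x).hasFDerivAt
    have hq : HasFDerivAt (fun y => f₁ y - f₂ y) (fderiv ℝ f₁ x - fderiv ℝ f₂ x) x := hd₁.sub hd₂
    have hw : HasFDerivAt w
        ((f₁ x - f₂ x) • (fderiv ℝ f₁ x - fderiv ℝ f₂ x) +
          (f₁ x - f₂ x) • (fderiv ℝ f₁ x - fderiv ℝ f₂ x)) x := (hq.mul hq).add_const (δ * δ)
    have hsq := hw.sqrt (hwpos x).ne'
    have hsq' : HasFDerivAt (fun y => Real.sqrt (w y))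
        (s x • (fderiv ℝ f₁ x - fderiv ℝ f₂ x)) x := by
      refine hsq.congr_fderiv ?_
      have hsqrtpos : 0 < Real.sqrt (w x) := Real.sqrt_pos.mpr (hwpos x)
      rw [smul_add, smul_smul, ← add_smul]
      congr 1
      rw [hsdef]
      field_simp
      ring
    exact (((hd₁.add hd₂).add (hsq'.sub_const δ))).const_mul (c/2)
  have hfderiv : ∀ x, fderiv ℝ F x = DF x := fun x => (hder x).fderiv
  -- |s| ≤ 1
  have hsqrt_ge : ∀ x, |f₁ x - f₂ x| ≤ Real.sqrt (w x) := by
    intro x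
    rw [← Real.sqrt_mul_self_eq_abs]
    exact Real.sqrt_le_sqrt (le_add_of_nonneg_right (mul_self_nonneg δ))
  have hs1 : ∀ x, |s x| ≤ 1 := by
    intro x
    rw [hsdef, abs_div, abs_of_nonneg (Real.sqrt_nonneg _),
      div_le_one (Real.sqrt_pos.mpr (hwpos x))]
    exact hsqrt_ge x
  -- norm bound
  have hnorm : ∀ x, ‖DF x‖ ≤ c * max ‖fderiv ℝ f₁ x‖ ‖fderiv ℝ f₂ x‖ := by
    intro x
    have h1 : (0:ℝ) ≤ 1 + s x := by have := (abs_le.mp (hs1 x)).1; linarith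
    have h2 : (0:ℝ) ≤ 1 - s x := by have := (abs_le.mp (hs1 x)).2; linarith
    have hre : DF x = (c/2) • ((1 + s x) • fderiv ℝ f₁ x + (1 - s x) • fderiv ℝ f₂ x) := by
      rw [hDF]; module
    set M := max ‖fderiv ℝ f₁ x‖ ‖fderiv ℝ f₂ x‖ with hM
    have hM0 : 0 ≤ M := le_trans (norm_nonneg _) (le_max_left _ _)
    have hb : ‖(1 + s x) • fderiv ℝ f₁ x + (1 - s x) • fderiv ℝ f₂ x‖ ≤ 2 * M := by
      refine (norm_add_le _ _).trans ?_
      rw [norm_smul, norm_smul, Real.norm_eq_abs, Real.norm_eq_abs,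
        abs_of_nonneg h1, abs_of_nonneg h2]
      have e1 : ‖fderiv ℝ f₁ x‖ ≤ M := le_max_left _ _
      have e2 : ‖fderiv ℝ f₂ x‖ ≤ M := le_max_right _ _
      nlinarith
    rw [hre]
    refine (norm_smul_le (c/2) ((1 + s x) • fderiv ℝ f₁ x + (1 - s x) • fderiv ℝ f₂ x)).trans ?_
    rw [Real.norm_eq_abs, abs_of_nonneg (by positivity : (0:ℝ) ≤ c/2)]
    calc c/2 * ‖(1 + s x) • fderiv ℝ f₁ x + (1 - s x) • fderiv ℝ f₂ x‖
        ≤ c/2 * (2 * M) := by gcongr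
      _ = c * M := by ring
  -- membership in Adm
  have hsupp : tsupport F ⊆ tsupport f₁ ∪ tsupport f₂ := by
    apply closure_minimal _ ((isClosed_tsupport f₁).union (isClosed_tsupport f₂))
    intro x hx
    by_contra h
    have e1 : f₁ x = 0 := image_eq_zero_of_notMem_tsupport fun hh => h (Or.inl hh)
    have e2 : f₂ x = 0 := image_eq_zero_of_notMem_tsupport fun hh => h (Or.inr hh)
    apply hx
    rw [hFdef]
    simp only [hwdef, e1, e2]
    rw [show ((0:ℝ)-0)*((0:ℝ)-0)+δ*δ = δ*δ by ring, Real.sqrt_mul_self hδ0.le]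
    ring
  have hmem : F ∈ Adm (K₁ ∪ K₂) Ω := by
    refine ⟨hFc, ?_, hsupp.trans (union_subset hΩ₁ hΩ₂), ?_⟩
    · exact IsCompact.of_isClosed_subset (hs₁.union hs₂) (isClosed_tsupport F) hsupp
    · rintro x (hx | hx)
      · have hf1 : 1 ≤ f₁ x := hK₁ x hx
        have hge : f₁ x - f₂ x ≤ Real.sqrt (w x) := (le_abs_self _).trans (hsqrt_ge x)
        have : 2 - δ ≤ f₁ x + f₂ x + (Real.sqrt (w x) - δ) := by linarith
        have h2 : (c/2) * (2 - δ) ≤ F x := by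
          rw [hFdef]
          exact mul_le_mul_of_nonneg_left this (by positivity)
        refine le_trans (le_of_eq ?_) h2
        have hone : c * (1 - δ/2) = 1 := by rw [hc]; exact inv_mul_cancel₀ hhalf.ne'
        rw [show c/2*(2-δ) = c*(1-δ/2) by ring, hone]
      · have hf2 : 1 ≤ f₂ x := hK₂ x hx
        have hge : f₂ x - f₁ x ≤ Real.sqrt (w x) := by
          have := hsqrt_ge x
          have h3 : f₂ x - f₁ x ≤ |f₁ x - f₂ x| := by
            rw [abs_sub_comm]; exact le_abs_self _
          linarith
        have : 2 - δ ≤ f₁ x + f₂ x + (Real.sqrt (w x) - δ) := by linarith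
        have h2 : (c/2) * (2 - δ) ≤ F x := by
          rw [hFdef]
          exact mul_le_mul_of_nonneg_left this (by positivity)
        refine le_trans (le_of_eq ?_) h2
        have hone : c * (1 - δ/2) = 1 := by rw [hc]; exact inv_mul_cancel₀ hhalf.ne'
        rw [show c/2*(2-δ) = c*(1-δ/2) by ring, hone]
  refine ⟨F, hmem, ?_⟩
  -- pointwise bound under the integral
  have key : ∀ᵐ x ∂((volume : Measure (EuclideanSpace ℝ (Fin n))).restrict Ω),
      ENNReal.ofReal (|‖fderiv ℝ F x‖| ^ p x * ϑ x) ≤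
        ENNReal.ofReal (c ^ C) *
          (ENNReal.ofReal (|‖fderiv ℝ f₁ x‖| ^ p x * ϑ x) +
            ENNReal.ofReal (|‖fderiv ℝ f₂ x‖| ^ p x * ϑ x)) := by
    filter_upwards [ae_restrict_of_ae hpae] with x hx
    obtain ⟨hp0, hpC⟩ := hx
    set a := ‖fderiv ℝ f₁ x‖ with ha
    set b := ‖fderiv ℝ f₂ x‖ with hb
    have ha0 : 0 ≤ a := norm_nonneg _
    have hb0 : 0 ≤ b := norm_nonneg _
    have hM0 : 0 ≤ max a b := le_trans ha0 (le_max_left _ _)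
    have h1 : |‖fderiv ℝ F x‖| ^ p x ≤ c ^ C * (|a| ^ p x + |b| ^ p x) := by
      have hm : |‖fderiv ℝ F x‖| ≤ c * max a b := by
        rw [abs_of_nonneg (norm_nonneg _), hfderiv x]; exact hnorm x
      have e1 : |‖fderiv ℝ F x‖| ^ p x ≤ (c * max a b) ^ p x :=
        Real.rpow_le_rpow (abs_nonneg _) hm hp0
      rw [Real.mul_rpow hc0.le hM0] at e1
      have e2 : c ^ p x ≤ c ^ C := Real.rpow_le_rpow_of_exponent_le hc1 hpC
      have e3 : (max a b) ^ p x ≤ |a| ^ p x + |b| ^ p x := by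
        rcases max_cases a b with ⟨h, _⟩ | ⟨h, _⟩ <;> rw [h]
        · calc a ^ p x = |a| ^ p x := by rw [abs_of_nonneg ha0]
            _ ≤ |a| ^ p x + |b| ^ p x :=
              le_add_of_nonneg_right (Real.rpow_nonneg (abs_nonneg _) _)
        · calc b ^ p x = |b| ^ p x := by rw [abs_of_nonneg hb0]
            _ ≤ |a| ^ p x + |b| ^ p x :=
              le_add_of_nonneg_left (Real.rpow_nonneg (abs_nonneg _) _)
      calc |‖fderiv ℝ F x‖| ^ p x ≤ c ^ p x * (max a b) ^ p x := e1
        _ ≤ c ^ C * (|a| ^ p x + |b| ^ p x) := by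
            have := Real.rpow_nonneg hM0 (p x)
            have hcC : (0:ℝ) ≤ c ^ C := Real.rpow_nonneg hc0.le _
            nlinarith [Real.rpow_nonneg (abs_nonneg a) (p x),
              Real.rpow_nonneg (abs_nonneg b) (p x), Real.rpow_nonneg hc0.le (p x)]
    calc ENNReal.ofReal (|‖fderiv ℝ F x‖| ^ p x * ϑ x)
        ≤ ENNReal.ofReal (c ^ C * (|a| ^ p x + |b| ^ p x) * ϑ x) :=
          ENNReal.ofReal_le_ofReal (mul_le_mul_of_nonneg_right h1 (hϑ0 x))
      _ = ENNReal.ofReal (c ^ C) *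
          (ENNReal.ofReal (|a| ^ p x * ϑ x) + ENNReal.ofReal (|b| ^ p x * ϑ x)) := by
          rw [mul_assoc, ENNReal.ofReal_mul (Real.rpow_nonneg hc0.le _), add_mul,
            ENNReal.ofReal_add (mul_nonneg (Real.rpow_nonneg (abs_nonneg _) _) (hϑ0 x))
              (mul_nonneg (Real.rpow_nonneg (abs_nonneg _) _) (hϑ0 x))]
  -- integrate
  have hmeas₁ : AEMeasurable
      (fun x => ENNReal.ofReal (|‖fderiv ℝ f₁ x‖| ^ p x * ϑ x))
      ((volume : Measure (EuclideanSpace ℝ (Fin n))).restrict Ω) := by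
    apply ENNReal.measurable_ofReal.comp_aemeasurable
    exact ((((hf₁.continuous_fderiv one_ne_zero).norm.abs.measurable).pow hpmeas).aemeasurable.mul
      hϑm.restrict)
  calc rhoMod p ϑ Ω (fun x => ‖fderiv ℝ F x‖)
      ≤ ∫⁻ x in Ω, ENNReal.ofReal (c ^ C) *
          (ENNReal.ofReal (|‖fderiv ℝ f₁ x‖| ^ p x * ϑ x) +
            ENNReal.ofReal (|‖fderiv ℝ f₂ x‖| ^ p x * ϑ x)) := lintegral_mono_ae key
    _ = ENNReal.ofReal (c ^ C) *
          (rhoMod p ϑ Ω (fun x => ‖fderiv ℝ f₁ x‖) +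
            rhoMod p ϑ Ω (fun x => ‖fderiv ℝ f₂ x‖)) := by
        rw [lintegral_const_mul' _ _ ENNReal.ofReal_ne_top,
          lintegral_add_left' hmeas₁]
        rfl


lemma relCapK_add_le_of_adm (hpmeas : Measurable p) {C : ℝ} (hC1 : 1 ≤ C)
    (hpae : ∀ᵐ x ∂(volume : Measure (EuclideanSpace ℝ (Fin n))), 0 ≤ p x ∧ p x ≤ C)
    (hϑ0 : ∀ x, 0 ≤ ϑ x)
    (hϑm : AEMeasurable ϑ (volume : Measure (EuclideanSpace ℝ (Fin n))))
    {K₁ K₂ Ω : Set (EuclideanSpace ℝ (Fin n))}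
    {f₁ f₂ : EuclideanSpace ℝ (Fin n) → ℝ}
    (h₁ : f₁ ∈ Adm K₁ Ω) (h₂ : f₂ ∈ Adm K₂ Ω) :
    relCapK p ϑ (K₁ ∪ K₂) Ω ≤
      rhoMod p ϑ Ω (fun x => ‖fderiv ℝ f₁ x‖) + rhoMod p ϑ Ω (fun x => ‖fderiv ℝ f₂ x‖) := by
  set R := rhoMod p ϑ Ω (fun x => ‖fderiv ℝ f₁ x‖) + rhoMod p ϑ Ω (fun x => ‖fderiv ℝ f₂ x‖)
    with hR
  have hall : ∀ δ : ℝ, δ ∈ Set.Ioo (0:ℝ) 1 →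
      relCapK p ϑ (K₁ ∪ K₂) Ω ≤ ENNReal.ofReal ((1 - δ/2)⁻¹ ^ C) * R := by
    rintro δ ⟨hδ0, hδ1⟩
    obtain ⟨F, hF, hrho⟩ := adm_union hpmeas hC1 hpae hϑ0 hϑm h₁ h₂ hδ0 hδ1
    exact le_trans (relCapK_le_of_adm hF) hrho
  have htend : Tendsto (fun δ : ℝ => ENNReal.ofReal ((1 - δ/2)⁻¹ ^ C) * R)
      (nhdsWithin (0:ℝ) (Set.Ioi 0)) (nhds (1 * R)) := by
    apply ENNReal.Tendsto.mul_const _ (Or.inl one_ne_zero)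
    have hcont : ContinuousAt (fun δ : ℝ => ENNReal.ofReal ((1 - δ/2)⁻¹ ^ C)) 0 := by
      apply ENNReal.continuous_ofReal.continuousAt.comp
      apply ContinuousAt.rpow_const _ (Or.inl (by norm_num))
      exact ((continuousAt_const.sub (continuousAt_id.div_const 2)).inv₀ (by norm_num))
    have h0 : ((1:ℝ) - 0/2)⁻¹ ^ C = 1 := by norm_num
    have := hcont.tendsto
    rw [show ENNReal.ofReal ((1 - (0:ℝ)/2)⁻¹ ^ C) = 1 by rw [h0]; simp] at this
    exact this.mono_left nhdsWithin_le_nhds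
  rw [one_mul] at htend
  refine ge_of_tendsto htend ?_
  filter_upwards [Ioo_mem_nhdsGT_of_mem (Set.mem_Ico.mpr ⟨le_rfl, one_pos⟩)] with δ hδ
  exact hall δ hδ

lemma relCapK_union_le (hpmeas : Measurable p) {C : ℝ} (hC1 : 1 ≤ C)
    (hpae : ∀ᵐ x ∂(volume : Measure (EuclideanSpace ℝ (Fin n))), 0 ≤ p x ∧ p x ≤ C)
    (hϑ0 : ∀ x, 0 ≤ ϑ x)
    (hϑm : AEMeasurable ϑ (volume : Measure (EuclideanSpace ℝ (Fin n))))
    (K₁ K₂ Ω : Set (EuclideanSpace ℝ (Fin n))) :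
    relCapK p ϑ (K₁ ∪ K₂) Ω ≤ relCapK p ϑ K₁ Ω + relCapK p ϑ K₂ Ω := by
  by_cases h₁ : relCapK p ϑ K₁ Ω = ⊤
  · rw [h₁, top_add]; exact le_top
  by_cases h₂ : relCapK p ϑ K₂ Ω = ⊤
  · rw [h₂, add_top]; exact le_top
  apply ENNReal.le_of_forall_pos_le_add
  intro ε hε _
  have hε2 : ((ε:ℝ≥0∞)/2) ≠ 0 := by
    simp only [ne_eq, ENNReal.div_eq_zero_iff, ENNReal.coe_eq_zero, ENNReal.ofNat_ne_top,
      or_false]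
    exact_mod_cast hε.ne'
  obtain ⟨r₁, ⟨f₁, hf₁, rfl⟩, hr₁⟩ := sInf_lt_iff.mp
    (show relCapK p ϑ K₁ Ω < relCapK p ϑ K₁ Ω + (ε:ℝ≥0∞)/2 from ENNReal.lt_add_right h₁ hε2)
  obtain ⟨r₂, ⟨f₂, hf₂, rfl⟩, hr₂⟩ := sInf_lt_iff.mp
    (show relCapK p ϑ K₂ Ω < relCapK p ϑ K₂ Ω + (ε:ℝ≥0∞)/2 from ENNReal.lt_add_right h₂ hε2)
  calc relCapK p ϑ (K₁ ∪ K₂) Ω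
      ≤ rhoMod p ϑ Ω (fun x => ‖fderiv ℝ f₁ x‖) + rhoMod p ϑ Ω (fun x => ‖fderiv ℝ f₂ x‖) :=
        relCapK_add_le_of_adm hpmeas hC1 hpae hϑ0 hϑm hf₁ hf₂
    _ ≤ (relCapK p ϑ K₁ Ω + (ε:ℝ≥0∞)/2) + (relCapK p ϑ K₂ Ω + (ε:ℝ≥0∞)/2) :=
        add_le_add hr₁.le hr₂.le
    _ = relCapK p ϑ K₁ Ω + relCapK p ϑ K₂ Ω + ((ε:ℝ≥0∞)/2 + (ε:ℝ≥0∞)/2) := by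
        rw [add_add_add_comm]
    _ = relCapK p ϑ K₁ Ω + relCapK p ϑ K₂ Ω + ε := by rw [ENNReal.add_halves]

lemma relCapK_biUnion_le (hpmeas : Measurable p) {C : ℝ} (hC1 : 1 ≤ C)
    (hpae : ∀ᵐ x ∂(volume : Measure (EuclideanSpace ℝ (Fin n))), 0 ≤ p x ∧ p x ≤ C)
    (hp0 : ∀ᵐ x ∂(volume : Measure (EuclideanSpace ℝ (Fin n))), p x ≠ 0)
    (hϑ0 : ∀ x, 0 ≤ ϑ x)
    (hϑm : AEMeasurable ϑ (volume : Measure (EuclideanSpace ℝ (Fin n))))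
    {ι : Type*} [DecidableEq ι] (K : ι → Set (EuclideanSpace ℝ (Fin n)))
    (Ω : Set (EuclideanSpace ℝ (Fin n))) (F : Finset ι) :
    relCapK p ϑ (⋃ i ∈ F, K i) Ω ≤ ∑ i ∈ F, relCapK p ϑ (K i) Ω := by
  induction F using Finset.induction_on with
  | empty => simp [relCapK_empty hp0 Ω]
  | @insert a T ha ih =>
    rw [Finset.set_biUnion_insert, Finset.sum_insert ha]
    exact (relCapK_union_le hpmeas hC1 hpae hϑ0 hϑm _ _ Ω).trans (add_le_add le_rfl ih)


end CapAux

open CapAux in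
/-- Countable subadditivity of the relative `(p(·),ϑ)`-capacity. -/
theorem stmt6 (n : ℕ) (hn : 1 ≤ n) (p ϑ : EuclideanSpace ℝ (Fin n) → ℝ)
    (hp : Measurable p)
    (hpm : 1 < essInf p (volume : Measure (EuclideanSpace ℝ (Fin n))))
    (hpb : Filter.IsBoundedUnder (· ≤ ·) (ae (volume : Measure (EuclideanSpace ℝ (Fin n)))) p)
    (hϑpos : ∀ x, 0 < ϑ x)
    (hϑloc : LocallyIntegrable ϑ (volume : Measure (EuclideanSpace ℝ (Fin n))))
    (Ω : Set (EuclideanSpace ℝ (Fin n))) (hΩ : IsOpen Ω) (A : ℕ → Set (EuclideanSpace ℝ (Fin n))) (hAΩ : ∀ m, A m ⊆ Ω) :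
    relCap p ϑ (⋃ m, A m) Ω ≤ ∑' m, relCap p ϑ (A m) Ω := by
  classical
  -- a.e. bounds on p
  obtain ⟨C₀, hC₀⟩ := hpb
  rw [Filter.eventually_map] at hC₀
  set C : ℝ := max C₀ 1 with hCdef
  have hC1 : (1:ℝ) ≤ C := le_max_right _ _
  have hlow : ∃ a : ℝ, 1 < a ∧ ∀ᵐ x ∂(volume : Measure (EuclideanSpace ℝ (Fin n))), a ≤ p x := by
    have h1 : essInf p (volume : Measure (EuclideanSpace ℝ (Fin n))) =
        sSup {a : ℝ | ∀ᵐ x ∂(volume : Measure (EuclideanSpace ℝ (Fin n))), a ≤ p x} :=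
      Filter.liminf_eq
    set S := {a : ℝ | ∀ᵐ x ∂(volume : Measure (EuclideanSpace ℝ (Fin n))), a ≤ p x} with hS
    have hne : S.Nonempty := by
      by_contra h
      rw [Set.not_nonempty_iff_eq_empty] at h
      rw [h1, h, Real.sSup_empty] at hpm
      linarith
    obtain ⟨a, haS, ha⟩ := exists_lt_of_lt_csSup hne (h1 ▸ hpm)
    exact ⟨a, ha, haS⟩
  obtain ⟨a, ha1, haae⟩ := hlow
  have hpae : ∀ᵐ x ∂(volume : Measure (EuclideanSpace ℝ (Fin n))), 0 ≤ p x ∧ p x ≤ C := by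
    filter_upwards [haae, hC₀] with x h1 h2
    exact ⟨by linarith, le_trans h2 (le_max_left _ _)⟩
  have hp0 : ∀ᵐ x ∂(volume : Measure (EuclideanSpace ℝ (Fin n))), p x ≠ 0 := by
    filter_upwards [haae] with x h1
    intro h; rw [h] at h1; linarith
  have hϑ0 : ∀ x, 0 ≤ ϑ x := fun x => (hϑpos x).le
  have hϑm : AEMeasurable ϑ (volume : Measure (EuclideanSpace ℝ (Fin n))) :=
    hϑloc.aestronglyMeasurable.aemeasurable
  -- main argument
  apply ENNReal.le_of_forall_pos_le_add
  intro ε hε hS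
  obtain ⟨δs, hδ0, hδsum⟩ :=
    ENNReal.exists_pos_sum_of_countable' (show ((ε:ℝ≥0∞)) ≠ 0 by exact_mod_cast hε.ne') ℕ
  have hchoice : ∀ m, ∃ U : Set (EuclideanSpace ℝ (Fin n)),
      (IsOpen U ∧ A m ⊆ U ∧ U ⊆ Ω) ∧
        relCapO p ϑ U Ω ≤ relCap p ϑ (A m) Ω + δs m := by
    intro m
    have hfin : relCap p ϑ (A m) Ω ≠ ⊤ := (lt_of_le_of_lt (ENNReal.le_tsum m) hS).ne
    have hlt : relCap p ϑ (A m) Ω < relCap p ϑ (A m) Ω + δs m :=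
      ENNReal.lt_add_right hfin (hδ0 m).ne'
    have h2 : (⨅ (U : Set (EuclideanSpace ℝ (Fin n)))
        (_ : IsOpen U ∧ A m ⊆ U ∧ U ⊆ Ω), relCapO p ϑ U Ω) <
        relCap p ϑ (A m) Ω + δs m := hlt
    obtain ⟨U, hU⟩ := iInf_lt_iff.mp h2
    obtain ⟨hUP, hU3⟩ := iInf_lt_iff.mp hU
    exact ⟨U, hUP, hU3.le⟩
  choose U hUP hUcap using hchoice
  have hV : relCap p ϑ (⋃ m, A m) Ω ≤ relCapO p ϑ (⋃ m, U m) Ω := by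
    have hP : IsOpen (⋃ m, U m) ∧ (⋃ m, A m) ⊆ (⋃ m, U m) ∧ (⋃ m, U m) ⊆ Ω :=
      ⟨isOpen_iUnion (fun m => (hUP m).1), Set.iUnion_mono (fun m => (hUP m).2.1),
        Set.iUnion_subset (fun m => (hUP m).2.2)⟩
    calc relCap p ϑ (⋃ m, A m) Ω
        = ⨅ (V : Set (EuclideanSpace ℝ (Fin n)))
            (_ : IsOpen V ∧ (⋃ m, A m) ⊆ V ∧ V ⊆ Ω), relCapO p ϑ V Ω := rfl
      _ ≤ _ := iInf₂_le (⋃ m, U m) hP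
  refine hV.trans ?_
  have hO : relCapO p ϑ (⋃ m, U m) Ω ≤ ∑' m, relCap p ϑ (A m) Ω + ε := by
    refine iSup₂_le fun K hK => ?_
    obtain ⟨hKc, hKU⟩ := hK
    obtain ⟨T, hT⟩ := hKc.elim_finite_subcover U (fun m => (hUP m).1) hKU
    have hKT : K ⊆ ⋃ i : {x // x ∈ T}, U ↑i := by
      rw [Set.iUnion_subtype]
      exact hT
    obtain ⟨v, hKv, hvo, hvc⟩ := exists_subset_iUnion_closure_subset hKc.isClosed
      (fun i : {x // x ∈ T} => (hUP ↑i).1) (fun x _ => Set.toFinite _) hKT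
    have hcover : K ⊆ ⋃ i ∈ (Finset.univ : Finset {x // x ∈ T}), (K ∩ closure (v i)) := by
      intro x hx
      obtain ⟨i, hi⟩ := Set.mem_iUnion.mp (hKv hx)
      simp only [Finset.mem_univ, Set.iUnion_true, Set.mem_iUnion]
      exact ⟨i, hx, subset_closure hi⟩
    calc relCapK p ϑ K Ω
        ≤ relCapK p ϑ (⋃ i ∈ (Finset.univ : Finset {x // x ∈ T}), (K ∩ closure (v i))) Ω :=
          relCapK_mono hcover
      _ ≤ ∑ i ∈ (Finset.univ : Finset {x // x ∈ T}), relCapK p ϑ (K ∩ closure (v i)) Ω :=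
          relCapK_biUnion_le hp hC1 hpae hp0 hϑ0 hϑm _ Ω _
      _ ≤ ∑ i ∈ (Finset.univ : Finset {x // x ∈ T}), relCapO p ϑ (U ↑i) Ω := by
          refine Finset.sum_le_sum fun i _ => ?_
          exact relCapK_le_relCapO (hKc.inter_right isClosed_closure)
            ((Set.inter_subset_right).trans (hvc i))
      _ ≤ ∑ i ∈ (Finset.univ : Finset {x // x ∈ T}), (relCap p ϑ (A ↑i) Ω + δs ↑i) :=
          Finset.sum_le_sum fun i _ => hUcap ↑i
      _ = ∑ i ∈ T, (relCap p ϑ (A i) Ω + δs i) :=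
          Finset.sum_coe_sort T (fun i => relCap p ϑ (A i) Ω + δs i)
      _ ≤ ∑' m, (relCap p ϑ (A m) Ω + δs m) := ENNReal.sum_le_tsum T
      _ = ∑' m, relCap p ϑ (A m) Ω + ∑' m, δs m := ENNReal.tsum_add
      _ ≤ ∑' m, relCap p ϑ (A m) Ω + ε := add_le_add le_rfl hδsum.le
  exact hO


end
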